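/- The one-sided derivative characterization of the marginal price: for the cost function C(d) of the dispatch LP with sorted prices p_1 ≤ ⋯ ≤ p_n, C is piecewise linear with C(d) = C(D_{k−1}) + p_k(d − D_{k−1}) for d ∈ [D_{k−1}, D_k], where D_k = q_1 + ⋯ + q_k; hence the right derivative of C at d equals the marginal price of the merit-order dispatch. -/

import Mathlib

/-- Piecewise linearity of the dispatch-LP cost function: on each merit-order block
the cost grows affinely with slope equal to the marginal price, which is therefore
its right derivative. -/
theorem stmt_16 (n : ℕ) (p q : ℕ → ℝ)
    (hq : ∀ k < n, 0 < q k)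
    (hsort : ∀ i, ∀ j, i ≤ j → j < n → p i ≤ p j)
    (D : ℕ → ℝ) (hD : ∀ k, D k = ∑ i ∈ Finset.range k, q i)
    (C : ℝ → ℝ)
    (hC : ∀ d ∈ Set.Icc (0 : ℝ) (D n),
      C d = sInf {c : ℝ | ∃ s : ℕ → ℝ, (∀ j < n, 0 ≤ s j ∧ s j ≤ q j) ∧
        (∑ j ∈ Finset.range n, s j = d) ∧ c = ∑ j ∈ Finset.range n, p j * s j}) :
    (∀ k < n, ∀ d ∈ Set.Icc (D k) (D (k + 1)),
      C d = C (D k) + p k * (d - D k)) ∧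
    (∀ k < n, ∀ d ∈ Set.Ico (D k) (D (k + 1)),
      HasDerivWithinAt C (p k) (Set.Ici d) d) := by
  have hDmono : ∀ a b : ℕ, a ≤ b → b ≤ n → D a ≤ D b := by
    intro a b hab hbn
    rw [hD, hD]
    apply Finset.sum_le_sum_of_subset_of_nonneg (Finset.range_subset_range.2 hab)
    intro i hi _
    exact (hq i (lt_of_lt_of_le (Finset.mem_range.1 hi) hbn)).le
  have hD0 : D 0 = 0 := by rw [hD]; simp
  have key : ∀ k < n, ∀ d ∈ Set.Icc (D k) (D (k + 1)),
      C d = (∑ i ∈ Finset.range k, p i * q i) + p k * (d - D k) := by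
    intro k hk d hd
    have hkn : k + 1 ≤ n := hk
    have hd0 : (0 : ℝ) ≤ d := by
      have h1 : D 0 ≤ D k := hDmono 0 k (Nat.zero_le _) hk.le
      rw [hD0] at h1; linarith [hd.1]
    have hdn : d ≤ D n := le_trans hd.2 (hDmono _ _ hkn le_rfl)
    have hDk1 : D (k + 1) = D k + q k := by
      rw [hD, hD, Finset.sum_range_succ]
    set F : ℝ := (∑ i ∈ Finset.range k, p i * q i) + p k * (d - D k) with hF
    set s0 : ℕ → ℝ := fun j => if j < k then q j else if j = k then d - D k else 0 with hs0
    have hmem : F ∈ {c : ℝ | ∃ s : ℕ → ℝ, (∀ j < n, 0 ≤ s j ∧ s j ≤ q j) ∧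
        (∑ j ∈ Finset.range n, s j = d) ∧ c = ∑ j ∈ Finset.range n, p j * s j} := by
      refine ⟨s0, ?_, ?_, ?_⟩
      · intro j hj
        by_cases h1 : j < k
        · simp only [hs0, if_pos h1]
          exact ⟨(hq j hj).le, le_rfl⟩
        · by_cases h2 : j = k
          · simp only [hs0, if_neg h1, if_pos h2]
            subst h2
            constructor
            · linarith [hd.1]
            · linarith [hd.2, hDk1]
          · simp only [hs0, if_neg h1, if_neg h2]
            exact ⟨le_rfl, (hq j hj).le⟩
      · have hzero : ∀ x ∈ Finset.range n, x ∉ Finset.range (k + 1) → s0 x = 0 := by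
          intro x _ hx
          have : ¬ x < k + 1 := fun h => hx (Finset.mem_range.2 h)
          simp only [hs0]
          rw [if_neg (by omega), if_neg (by omega)]
        rw [← Finset.sum_subset (Finset.range_subset_range.2 hkn) hzero,
          Finset.sum_range_succ]
        have h1 : ∑ j ∈ Finset.range k, s0 j = ∑ j ∈ Finset.range k, q j :=
          Finset.sum_congr rfl (fun j hj => by
            simp only [hs0]; rw [if_pos (Finset.mem_range.1 hj)])
        have h2 : s0 k = d - D k := by
          simp [hs0]
        rw [h1, h2, ← hD]; ring
      · have hzero : ∀ x ∈ Finset.range n, x ∉ Finset.range (k + 1) → p x * s0 x = 0 := by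
          intro x _ hx
          have : ¬ x < k + 1 := fun h => hx (Finset.mem_range.2 h)
          simp only [hs0]
          rw [if_neg (by omega), if_neg (by omega), mul_zero]
        rw [← Finset.sum_subset (Finset.range_subset_range.2 hkn) hzero,
          Finset.sum_range_succ]
        have h1 : ∑ j ∈ Finset.range k, p j * s0 j = ∑ j ∈ Finset.range k, p j * q j :=
          Finset.sum_congr rfl (fun j hj => by
            simp only [hs0]; rw [if_pos (Finset.mem_range.1 hj)])
        have h2 : s0 k = d - D k := by
          simp [hs0]
        rw [h1, h2]
    have hlb : ∀ c ∈ {c : ℝ | ∃ s : ℕ → ℝ, (∀ j < n, 0 ≤ s j ∧ s j ≤ q j) ∧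
        (∑ j ∈ Finset.range n, s j = d) ∧ c = ∑ j ∈ Finset.range n, p j * s j}, F ≤ c := by
      rintro c ⟨s, hs, hsum, rfl⟩
      have h1 : ∀ j ∈ Finset.range k, (p j - p k) * q j ≤ (p j - p k) * s j := by
        intro j hj
        have hjk : j < k := Finset.mem_range.1 hj
        have hpj : p j - p k ≤ 0 := by linarith [hsort j k hjk.le hk]
        exact mul_le_mul_of_nonpos_left (hs j (hjk.trans hk)).2 hpj
      have h2 : ∀ j ∈ Finset.Ico k n, 0 ≤ (p j - p k) * s j := by
        intro j hj
        rw [Finset.mem_Ico] at hj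
        exact mul_nonneg (by linarith [hsort k j hj.1 hj.2]) (hs j hj.2).1
      have e1 : ∑ j ∈ Finset.range n, (p j - p k) * s j =
          ∑ j ∈ Finset.range k, (p j - p k) * s j + ∑ j ∈ Finset.Ico k n, (p j - p k) * s j := by
        simp only [Finset.range_eq_Ico]
        exact (Finset.sum_Ico_consecutive _ (Nat.zero_le k) hk.le).symm
      have big : ∑ j ∈ Finset.range k, (p j - p k) * q j ≤
          ∑ j ∈ Finset.range n, (p j - p k) * s j := by
        rw [e1]
        have t1 := Finset.sum_le_sum h1
        have t2 := Finset.sum_nonneg h2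
        linarith
      have expand : ∑ j ∈ Finset.range n, (p j - p k) * s j =
          ∑ j ∈ Finset.range n, p j * s j - p k * d := by
        simp only [sub_mul]
        rw [Finset.sum_sub_distrib, ← Finset.mul_sum, hsum]
      have expand2 : ∑ j ∈ Finset.range k, (p j - p k) * q j =
          ∑ j ∈ Finset.range k, p j * q j - p k * D k := by
        simp only [sub_mul]
        rw [Finset.sum_sub_distrib, ← Finset.mul_sum, ← hD]
      rw [expand, expand2] at big
      rw [hF]
      linarith
    rw [hC d ⟨hd0, hdn⟩]
    exact le_antisymm (csInf_le ⟨F, hlb⟩ hmem) (le_csInf ⟨F, hmem⟩ hlb)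
  have part1 : ∀ k < n, ∀ d ∈ Set.Icc (D k) (D (k + 1)),
      C d = C (D k) + p k * (d - D k) := by
    intro k hk d hd
    have hDk : D k ≤ D (k + 1) := hDmono k (k + 1) (Nat.le_succ k) hk
    rw [key k hk d hd, key k hk (D k) ⟨le_refl _, hDk⟩]
    ring
  refine ⟨part1, ?_⟩
  intro k hk d hd
  have hf : HasDerivWithinAt (fun x => C (D k) + p k * (x - D k)) (p k) (Set.Ici d) d := by
    have h : HasDerivAt (fun x : ℝ => C (D k) + p k * (x - D k)) (p k) d := by
      have := (((hasDerivAt_id d).sub_const (D k)).const_mul (p k)).const_add (C (D k))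
      simpa using this
    exact h.hasDerivWithinAt
  have hev : (fun x => C (D k) + p k * (x - D k)) =ᶠ[nhdsWithin d (Set.Ici d)] C := by
    have hmem : Set.Iio (D (k + 1)) ∈ nhdsWithin d (Set.Ici d) :=
      nhdsWithin_le_nhds (Iio_mem_nhds hd.2)
    filter_upwards [hmem, self_mem_nhdsWithin] with x hx1 hx2
    exact (part1 k hk x ⟨le_trans hd.1 hx2, le_of_lt hx1⟩).symm
  have heq : C d = C (D k) + p k * (d - D k) :=
    part1 k hk d ⟨hd.1, hd.2.le⟩
  exact hf.congr_of_eventuallyEq hev.symm heq
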